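/- Let f : ℝⁿ → ℝ be a multivariate quartic polynomial, t₀ > 0, and let x : [0,t₀] → ℝⁿ be a function differentiable on [0,t₀] whose derivative ẋ satisfies ∇_{xx}μ_f(x(t),t)·ẋ(t) + ∇_{tx}μ_f(x(t),t) = 0 for all t ∈ (0,t₀], and such that x and ẋ are continuous at t = 0. Then ẋ(0) lies in the null space of ∇²f(x(0)), i.e., ∇²f(x(0))·ẋ(0) = 0. In particular, if ∇²f(x(0)) is nonsingular, then lim_{t→0⁺} ẋ(t) = ẋ(0) = 0. -/

import Mathlib

open MeasureTheory Matrix Filter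

/-- Partial derivative of `f` in the `i`-th coordinate direction. -/
noncomputable def pd {n : ℕ} (i : Fin n) (f : (Fin n → ℝ) → ℝ) : (Fin n → ℝ) → ℝ :=
  fun x => fderiv ℝ f x (Pi.single i 1)

/-- The gradient of `f` at `x`, as a vector of first partial derivatives. -/
noncomputable def grad {n : ℕ} (f : (Fin n → ℝ) → ℝ) (x : Fin n → ℝ) : Fin n → ℝ :=
  fun i => pd i f x

/-- The Hessian matrix of `f` at `x`, of second partial derivatives. -/
noncomputable def hess {n : ℕ} (f : (Fin n → ℝ) → ℝ) (x : Fin n → ℝ) :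
    Matrix (Fin n) (Fin n) ℝ :=
  Matrix.of fun i j => pd i (pd j f) x

/-- The Steklov function `μ_f(x,t) = (1/(2t)^n) ∫_{x-t}^{x+t} ⋯ ∫ f`. -/
noncomputable def steklov {n : ℕ} (f : (Fin n → ℝ) → ℝ) (x : Fin n → ℝ) (t : ℝ) : ℝ :=
  (1 / (2 * t) ^ n) * ∫ τ in Set.univ.pi (fun i => Set.Icc (x i - t) (x i + t)), f τ

/-- `f` is a multivariate quartic polynomial: a polynomial of total degree at most 4. -/
def IsMQP {n : ℕ} (f : (Fin n → ℝ) → ℝ) : Prop :=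
  ∃ P : MvPolynomial (Fin n) ℝ, P.totalDegree ≤ 4 ∧ ∀ x, f x = MvPolynomial.eval x P

/-- The closed Euclidean (ℓ₂) ball of radius `L` centered at `0` in `ℝⁿ`. -/
def ball2 {n : ℕ} (L : ℝ) : Set (Fin n → ℝ) := {y | ∑ i, (y i) ^ 2 ≤ L ^ 2}

/-- The Euclidean (ℓ₂) norm of a vector. -/
noncomputable def l2norm {m : ℕ} (v : Fin m → ℝ) : ℝ := Real.sqrt (∑ i, (v i) ^ 2)

open MvPolynomial


lemma hasFDerivAt_mveval {n : ℕ} (P : MvPolynomial (Fin n) ℝ) (y : Fin n → ℝ) :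
    HasFDerivAt (fun x => eval x P)
      (∑ i, eval y (pderiv i P) • (ContinuousLinearMap.proj i : (Fin n → ℝ) →L[ℝ] ℝ)) y := by
  induction P using MvPolynomial.induction_on with
  | C a =>
      simp only [eval_C, pderiv_C, map_zero, zero_smul, Finset.sum_const_zero]
      exact hasFDerivAt_const a y
  | add p q hp hq =>
      simp only [map_add, add_smul, Finset.sum_add_distrib]
      exact (hp.add hq : _)
  | mul_X p j hp =>
      have h2 : HasFDerivAt (fun x : Fin n → ℝ => x j)
          (ContinuousLinearMap.proj j : (Fin n → ℝ) →L[ℝ] ℝ) y := by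
        exact (ContinuousLinearMap.proj (R := ℝ) (φ := fun _ : Fin n => ℝ) j).hasFDerivAt
      have := hp.mul' h2
      have h3 : HasFDerivAt (fun x => eval x (p * X j))
          (y j • (∑ i, eval y (pderiv i p) • (ContinuousLinearMap.proj i : (Fin n → ℝ) →L[ℝ] ℝ))
            + eval y p • (ContinuousLinearMap.proj j : (Fin n → ℝ) →L[ℝ] ℝ)) y := by
        have e : (y j • (∑ i, eval y (pderiv i p) • (ContinuousLinearMap.proj i : (Fin n → ℝ) →L[ℝ] ℝ))
            + eval y p • (ContinuousLinearMap.proj j : (Fin n → ℝ) →L[ℝ] ℝ))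
          = (eval y p • (ContinuousLinearMap.proj j : (Fin n → ℝ) →L[ℝ] ℝ)
            + (∑ i, eval y (pderiv i p) • (ContinuousLinearMap.proj i : (Fin n → ℝ) →L[ℝ] ℝ)).smulRight (y j)) := by
          ext v
          simp [mul_comm]
          ring
        rw [e]
        simp only [eval_mul, eval_X]
        refine (this.congr_fderiv ?_ : _)
        ext v
        simp only [ContinuousLinearMap.add_apply, ContinuousLinearMap.smul_apply,
          ContinuousLinearMap.smulRight_apply, smul_eq_mul, op_smul_eq_mul]
      convert h3 using 1
      rw [Finset.smul_sum]
      have : ∀ i : Fin n, eval y (pderiv i (p * X j)) •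
            (ContinuousLinearMap.proj i : (Fin n → ℝ) →L[ℝ] ℝ)
          = y j • eval y (pderiv i p) • (ContinuousLinearMap.proj i : (Fin n → ℝ) →L[ℝ] ℝ)
            + (if i = j then eval y p • (ContinuousLinearMap.proj i : (Fin n → ℝ) →L[ℝ] ℝ) else 0) := by
        intro i
        rw [pderiv_mul, pderiv_X]
        by_cases h : i = j <;> simp [h, Pi.single_apply, add_smul, smul_smul, mul_comm]
      rw [Finset.sum_congr rfl (fun i _ => this i), Finset.sum_add_distrib,
        Finset.sum_ite_eq' Finset.univ j]
      simp

lemma pd_mveval {n : ℕ} (i : Fin n) (P : MvPolynomial (Fin n) ℝ) :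
    pd i (fun x => eval x P) = fun y => eval y (pderiv i P) := by
  funext y
  rw [pd, (hasFDerivAt_mveval P y).fderiv]
  simp [ContinuousLinearMap.proj, Pi.single_apply]


noncomputable def br (k : ℕ) (a : ℝ) : ℝ :=
  if k = 2 then 1/3 else if k = 3 then a else if k = 4 then 2 * a^2 else 0

noncomputable def cr (k : ℕ) : ℝ := if k = 4 then 1/5 else 0

noncomputable def Ar (k : ℕ) (a t : ℝ) : ℝ := a ^ k + t^2 * br k a + t^4 * cr k

noncomputable def Bp {n : ℕ} (k : ℕ) (i : Fin n) : MvPolynomial (Fin n) ℝ :=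
  if k = 2 then C (1/3) else if k = 3 then X i else if k = 4 then C 2 * X i ^ 2 else 0

noncomputable def Cpoly {n : ℕ} (k : ℕ) : MvPolynomial (Fin n) ℝ :=
  if k = 4 then C (1/5) else 0

noncomputable def Ath {n : ℕ} (k : ℕ) (i : Fin n) : Polynomial (MvPolynomial (Fin n) ℝ) :=
  Polynomial.C (X i ^ k) + Polynomial.X * Polynomial.C (Bp k i)
    + Polynomial.X ^ 2 * Polynomial.C (Cpoly k)

noncomputable def Theta {n : ℕ} (P : MvPolynomial (Fin n) ℝ) :
    Polynomial (MvPolynomial (Fin n) ℝ) :=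
  ∑ m ∈ P.support, Polynomial.C (C (P.coeff m)) * ∏ i, Ath (m i) i

lemma eval_Ath {n : ℕ} (k : ℕ) (i : Fin n) (y : Fin n → ℝ) (t : ℝ) :
    eval y ((Ath k i).eval (C (t^2))) = Ar k (y i) t := by
  simp only [Ath, Polynomial.eval_add, Polynomial.eval_mul, Polynomial.eval_pow,
    Polynomial.eval_C, Polynomial.eval_X, map_add, _root_.map_mul, map_pow, eval_C, eval_X, Ar]
  unfold Bp br Cpoly cr
  split_ifs <;> simp <;> ring

lemma eval_Theta {n : ℕ} (P : MvPolynomial (Fin n) ℝ) (y : Fin n → ℝ) (t : ℝ) :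
    eval y ((Theta P).eval (C (t^2))) = ∑ m ∈ P.support, P.coeff m * ∏ i, Ar (m i) (y i) t := by
  simp only [Theta, Polynomial.eval_finset_sum, Polynomial.eval_mul, Polynomial.eval_C,
    Polynomial.eval_prod, map_sum, _root_.map_mul, eval_C, map_prod]
  exact Finset.sum_congr rfl fun m _ => by
    rw [Finset.prod_congr rfl fun i _ => eval_Ath (m i) i y t]

lemma coeff_zero_Theta {n : ℕ} (P : MvPolynomial (Fin n) ℝ) : (Theta P).coeff 0 = P := by
  rw [Polynomial.coeff_zero_eq_eval_zero]
  simp only [Theta, Polynomial.eval_finset_sum, Polynomial.eval_mul, Polynomial.eval_C,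
    Polynomial.eval_prod, Polynomial.eval_add, Polynomial.eval_pow, Polynomial.eval_X,
    zero_mul, mul_zero, add_zero, zero_pow, ne_eq, OfNat.ofNat_ne_zero, not_false_eq_true]
  conv_rhs => rw [P.as_sum]
  refine Finset.sum_congr rfl fun m _ => ?_
  rw [monomial_eq, Finsupp.prod_fintype _ _ (fun i => pow_zero (X i))]
  congr 1
  refine Finset.prod_congr rfl fun i _ => ?_
  simp [Ath, Polynomial.eval_add, Polynomial.eval_mul, Polynomial.eval_pow]

lemma natDegree_Theta {n : ℕ} (P : MvPolynomial (Fin n) ℝ) :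
    (Theta P).natDegree < 2 * n + 1 := by
  have h1 : ∀ (k : ℕ) (i : Fin n), (Ath k i).natDegree ≤ 2 := by
    intro k i
    refine le_trans (Polynomial.natDegree_add_le _ _) ?_
    simp only [max_le_iff]
    constructor
    · refine le_trans (Polynomial.natDegree_add_le _ _) ?_
      simp only [max_le_iff, Polynomial.natDegree_C]
      refine ⟨by norm_num, le_trans (Polynomial.natDegree_mul_le) ?_⟩
      simp [Polynomial.natDegree_X_le]
    · refine le_trans (Polynomial.natDegree_mul_le) ?_
      simp only [Polynomial.natDegree_C, add_zero]
      exact le_trans (Polynomial.natDegree_pow_le) (by simp [Polynomial.natDegree_X_le])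
  have : (Theta P).natDegree ≤ 2 * n := by
    refine le_trans (Polynomial.natDegree_sum_le _ _) ?_
    rw [Finset.fold_max_le]
    refine ⟨Nat.zero_le _, fun m _ => ?_⟩
    refine le_trans (Polynomial.natDegree_mul_le) ?_
    simp only [Polynomial.natDegree_C, zero_add]
    refine le_trans (Polynomial.natDegree_prod_le _ _) ?_
    calc (∑ i : Fin n, (Ath (m i) i).natDegree) ≤ ∑ _i : Fin n, 2 :=
          Finset.sum_le_sum fun i _ => h1 (m i) i
      _ = 2 * n := by simp [mul_comm]
  omega

lemma Theta_eval_decomp {n : ℕ} (P : MvPolynomial (Fin n) ℝ) (t : ℝ) :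
    (Theta P).eval (C (t^2))
      = ∑ r ∈ Finset.range (2 * n + 1), C (t ^ (2 * r)) * (Theta P).coeff r := by
  rw [Polynomial.eval_eq_sum_range' (natDegree_Theta P)]
  refine Finset.sum_congr rfl fun r _ => ?_
  rw [← map_pow, ← pow_mul, mul_comm ((Theta P).coeff r)]

lemma integral_Icc_pow (a t : ℝ) (ht : 0 < t) (k : ℕ) (hk : k ≤ 4) :
    (∫ x in Set.Icc (a - t) (a + t), x ^ k) / (2 * t) = Ar k a t := by
  have hle : a - t ≤ a + t := by linarith
  rw [integral_Icc_eq_integral_Ioc, ← intervalIntegral.integral_of_le hle, integral_pow]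
  have h2t : (2 * t) ≠ 0 := by positivity
  interval_cases k <;> simp only [Ar, br, cr] <;> norm_num <;> field_simp <;> ring

lemma box_integral_prod {n : ℕ} (g : Fin n → ℝ → ℝ) (hg : ∀ i, Continuous (g i))
    (S : Fin n → Set ℝ) (hS : ∀ i, MeasurableSet (S i)) :
    (∫ τ in Set.univ.pi S, ∏ i, g i (τ i)) = ∏ i, ∫ x in S i, g i x := by
  rw [← integral_indicator (MeasurableSet.univ_pi hS)]
  have : (Set.univ.pi S).indicator (fun τ => ∏ i, g i (τ i))
      = fun τ => ∏ i, (S i).indicator (g i) (τ i) := by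
    funext τ
    by_cases h : τ ∈ Set.univ.pi S
    · rw [Set.indicator_of_mem h]
      refine Finset.prod_congr rfl fun i _ => ?_
      rw [Set.indicator_of_mem (h i (Set.mem_univ i))]
    · rw [Set.indicator_of_notMem h]
      rw [Set.mem_pi] at h
      push_neg at h
      obtain ⟨i, _, hi⟩ := h
      exact (Finset.prod_eq_zero (Finset.mem_univ i) (by rw [Set.indicator_of_notMem hi])).symm
  rw [this, MeasureTheory.volume_pi, MeasureTheory.integral_fintype_prod_eq_prod (fun i x => (S i).indicator (g i) x)]
  exact Finset.prod_congr rfl fun i _ => (integral_indicator (hS i))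

lemma steklov_eq_sum {n : ℕ} (P : MvPolynomial (Fin n) ℝ)
    (hdeg : ∀ m ∈ P.support, ∀ i, m i ≤ 4) (y : Fin n → ℝ) {t : ℝ} (ht : 0 < t) :
    steklov (fun τ => eval τ P) y t
      = ∑ m ∈ P.support, P.coeff m * ∏ i, Ar (m i) (y i) t := by
  have hbox : MeasurableSet (Set.univ.pi fun i => Set.Icc (y i - t) (y i + t)) :=
    MeasurableSet.univ_pi fun i => measurableSet_Icc
  have hcomp : IsCompact (Set.univ.pi fun i => Set.Icc (y i - t) (y i + t)) :=
    isCompact_univ_pi fun i => isCompact_Icc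
  have key : (∫ τ in Set.univ.pi (fun i => Set.Icc (y i - t) (y i + t)), eval τ P)
      = ∑ m ∈ P.support, P.coeff m *
          ∏ i, ∫ x in Set.Icc (y i - t) (y i + t), x ^ (m i) := by
    have : ∀ τ : Fin n → ℝ, eval τ P = ∑ m ∈ P.support, P.coeff m * ∏ i, τ i ^ m i :=
      fun τ => eval_eq' τ P
    rw [show (fun τ : Fin n → ℝ => eval τ P)
        = fun τ => ∑ m ∈ P.support, P.coeff m * ∏ i, τ i ^ m i from funext this]
    rw [integral_finset_sum (f := fun m τ => P.coeff m * ∏ i, τ i ^ m i) _ (fun (m : Fin n →₀ ℕ) _ => (((continuous_const.mul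
        (continuous_finset_prod _ fun i _ => (continuous_apply i).pow (m i))) :
          Continuous fun τ : Fin n → ℝ => P.coeff m * ∏ i, τ i ^ m i).continuousOn.integrableOn_compact hcomp))]
    refine Finset.sum_congr rfl fun m hm => ?_
    rw [MeasureTheory.integral_const_mul, box_integral_prod (fun i x => x ^ m i)
      (fun i => continuous_pow (m i)) _ (fun i => measurableSet_Icc)]
  rw [steklov, key, Finset.mul_sum]
  refine Finset.sum_congr rfl fun m hm => ?_
  have h2t : (2 * t) ≠ 0 := by positivity
  have : ∏ i, Ar (m i) (y i) t
      = ∏ i, (∫ x in Set.Icc (y i - t) (y i + t), x ^ (m i)) / (2 * t) :=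
    Finset.prod_congr rfl fun i _ => (integral_Icc_pow (y i) t ht (m i) (hdeg m hm i)).symm
  rw [this, Finset.prod_div_distrib, Finset.prod_const, Finset.card_univ, Fintype.card_fin]
  field_simp

/-- If `x : [0,t₀] → ℝⁿ` is differentiable with derivative `ẋ`, with `x` and `ẋ` continuous
at `t = 0`, and satisfies the ODE `∇ₓₓμ_f(x(t),t)·ẋ(t) + ∇ₜₓμ_f(x(t),t) = 0` on `(0,t₀]`,
then `ẋ(0)` lies in the null space of `∇²f(x(0))`; in particular, if `∇²f(x(0))` is
nonsingular, then `lim_{t→0⁺} ẋ(t) = ẋ(0) = 0`. -/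
theorem trajectory_limit_in_nullspace {n : ℕ} (f : (Fin n → ℝ) → ℝ) (hf : IsMQP f)
    (t₀ : ℝ) (ht₀ : 0 < t₀)
    (x xd : ℝ → (Fin n → ℝ))
    (hdiff : ∀ t ∈ Set.Icc (0 : ℝ) t₀, HasDerivWithinAt x (xd t) (Set.Icc 0 t₀) t)
    (hxcont : ContinuousWithinAt x (Set.Icc 0 t₀) 0)
    (hxdcont : ContinuousWithinAt xd (Set.Icc 0 t₀) 0)
    (hode : ∀ t ∈ Set.Ioc (0 : ℝ) t₀,
      (hess (fun y => steklov f y t) (x t)).mulVec (xd t)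
        + (fun i => deriv (fun s => grad (fun y => steklov f y s) (x t) i) t) = 0) :
    (hess f (x 0)).mulVec (xd 0) = 0
    ∧ (IsUnit (hess f (x 0)).det →
        xd 0 = 0 ∧ Tendsto xd (nhdsWithin 0 (Set.Ioi 0)) (nhds 0)) := by
  obtain ⟨P, hPdeg, hPf⟩ := hf
  have hf' : f = fun τ => eval τ P := funext hPf
  subst hf'
  -- exponent bounds
  have hP4 : ∀ m ∈ P.support, ∀ i, m i ≤ 4 := by
    intro m hm i
    refine le_trans ?_ (le_trans (le_totalDegree hm) hPdeg)
    by_cases h : m i = 0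
    · simp [h]
    · rw [Finsupp.sum]
      exact Finset.single_le_sum (f := fun j => m j) (fun j _ => Nat.zero_le _)
        (Finsupp.mem_support_iff.2 h)
  set N := 2 * n + 1 with hN
  set Pr : ℕ → MvPolynomial (Fin n) ℝ := fun r => (Theta P).coeff r with hPr
  set Qp : ℝ → MvPolynomial (Fin n) ℝ := fun s => (Theta P).eval (C (s^2)) with hQp
  -- steklov = polynomial eval, for positive times
  have key1 : ∀ s : ℝ, 0 < s →
      (fun y => steklov (fun τ => eval τ P) y s) = fun y => eval y (Qp s) := by
    intro s hs
    funext y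
    rw [steklov_eq_sum P hP4 y hs, hQp, eval_Theta]
  have key2 : ∀ (s : ℝ) (i : Fin n),
      pderiv i (Qp s) = ∑ r ∈ Finset.range N, C (s ^ (2*r)) * pderiv i (Pr r) := by
    intro s i
    rw [hQp]
    simp only [Theta_eval_decomp P s, map_sum]
    exact Finset.sum_congr rfl fun r _ => pderiv_C_mul
  have key3 : ∀ (s : ℝ) (i j : Fin n),
      pderiv i (pderiv j (Qp s))
        = ∑ r ∈ Finset.range N, C (s ^ (2*r)) * pderiv i (pderiv j (Pr r)) := by
    intro s i j
    rw [key2 s j, map_sum]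
    exact Finset.sum_congr rfl fun r _ => pderiv_C_mul
  -- filters
  set l : Filter ℝ := nhdsWithin 0 (Set.Ioc 0 t₀) with hl
  have hlIoi : l = nhdsWithin 0 (Set.Ioi 0) := nhdsWithin_Ioc_eq_nhdsGT ht₀
  have hlbot : l.NeBot := by rw [hlIoi]; infer_instance
  have hx0 : Tendsto x l (nhds (x 0)) :=
    hxcont.mono_left (nhdsWithin_mono _ Set.Ioc_subset_Icc_self)
  have hxd0 : Tendsto xd l (nhds (xd 0)) :=
    hxdcont.mono_left (nhdsWithin_mono _ Set.Ioc_subset_Icc_self)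
  have htend : Tendsto (fun s : ℝ => s) l (nhds 0) := by
    have : Tendsto (fun s : ℝ => s) (nhds 0) (nhds 0) := fun _ h => h
    exact this.mono_left nhdsWithin_le_nhds
  -- main componentwise limit
  have main : ∀ i : Fin n,
      ∑ j, eval (x 0) (pderiv i (pderiv j P)) * xd 0 j = 0 := by
    intro i
    set Φ : ℝ → ℝ := fun t =>
      (∑ j, (∑ r ∈ Finset.range N, t ^ (2*r) * eval (x t) (pderiv i (pderiv j (Pr r))))
          * xd t j)
        + ∑ r ∈ Finset.range N, ((2*r : ℕ) : ℝ) * t ^ (2*r - 1) * eval (x t) (pderiv i (Pr r))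
      with hΦ
    have hΦ0 : ∀ t ∈ Set.Ioc (0:ℝ) t₀, Φ t = 0 := by
      intro t ht
      have hode' := congrFun (hode t ht) i
      -- hessian term
      have hhess : ∀ j : Fin n,
          hess (fun y => steklov (fun τ => eval τ P) y t) (x t) i j
            = ∑ r ∈ Finset.range N, t ^ (2*r) * eval (x t) (pderiv i (pderiv j (Pr r))) := by
        intro j
        show pd i (pd j (fun y => steklov (fun τ => eval τ P) y t)) (x t) = _
        rw [key1 t ht.1, pd_mveval j (Qp t), pd_mveval i (pderiv j (Qp t))]
        simp only [key3 t i j, map_sum, _root_.map_mul, eval_C]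
      -- gradient-derivative term
      have hgrad : deriv (fun s => grad (fun y => steklov (fun τ => eval τ P) y s) (x t) i) t
          = ∑ r ∈ Finset.range N, ((2*r : ℕ) : ℝ) * t ^ (2*r - 1) * eval (x t) (pderiv i (Pr r)) := by
        have heq : (fun s => grad (fun y => steklov (fun τ => eval τ P) y s) (x t) i)
            =ᶠ[nhds t] fun s => ∑ r ∈ Finset.range N, s ^ (2*r) * eval (x t) (pderiv i (Pr r)) := by
          refine eventually_of_mem (isOpen_Ioi.mem_nhds ht.1) (fun s hs => ?_)
          show pd i (fun y => steklov (fun τ => eval τ P) y s) (x t) = _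
          rw [key1 s hs, pd_mveval i (Qp s)]
          simp only [key2 s i, map_sum, _root_.map_mul, eval_C]
        rw [heq.deriv_eq]
        have : HasDerivAt (fun s : ℝ => ∑ r ∈ Finset.range N, s ^ (2*r) * eval (x t) (pderiv i (Pr r)))
            (∑ r ∈ Finset.range N, ((2*r : ℕ) : ℝ) * t ^ (2*r - 1) * eval (x t) (pderiv i (Pr r))) t := by
          refine HasDerivAt.fun_sum fun r _ => ?_
          simpa using (hasDerivAt_pow (2*r) t).mul_const (eval (x t) (pderiv i (Pr r)))
        exact this.deriv
      have hmv : (hess (fun y => steklov (fun τ => eval τ P) y t) (x t)).mulVec (xd t) i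
          = ∑ j, (∑ r ∈ Finset.range N, t ^ (2*r) * eval (x t) (pderiv i (pderiv j (Pr r))))
              * xd t j := by
        simp only [Matrix.mulVec, dotProduct]
        exact Finset.sum_congr rfl fun j _ => by rw [hhess j]
      simpa [hΦ, hmv, hgrad] using hode'
    -- limit of Φ along l
    have hlim : Tendsto Φ l (nhds (∑ j, eval (x 0) (pderiv i (pderiv j P)) * xd 0 j)) := by
      have hterm : ∀ (Q : MvPolynomial (Fin n) ℝ),
          Tendsto (fun t => eval (x t) Q) l (nhds (eval (x 0) Q)) :=
        fun Q => ((MvPolynomial.continuous_eval (p := Q)).tendsto (x 0)).comp hx0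
      have h1 : Tendsto Φ l (nhds
          ((∑ j, (∑ r ∈ Finset.range N, (0:ℝ) ^ (2*r) * eval (x 0) (pderiv i (pderiv j (Pr r))))
              * xd 0 j)
            + ∑ r ∈ Finset.range N, ((2*r : ℕ) : ℝ) * (0:ℝ) ^ (2*r - 1) * eval (x 0) (pderiv i (Pr r)))) := by
        refine Tendsto.add ?_ ?_
        · refine tendsto_finset_sum _ fun j _ => Tendsto.mul ?_ ?_
          · exact tendsto_finset_sum _ fun r _ =>
              Tendsto.mul (Tendsto.pow htend (2*r)) (hterm _)
          · exact ((continuous_apply j).tendsto (xd 0)).comp hxd0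
        · exact tendsto_finset_sum _ fun r _ =>
            Tendsto.mul (tendsto_const_nhds.mul (Tendsto.pow htend (2*r - 1))) (hterm _)
      have hA : ∀ j, (∑ r ∈ Finset.range N,
            (0:ℝ) ^ (2*r) * eval (x 0) (pderiv i (pderiv j (Pr r))))
          = eval (x 0) (pderiv i (pderiv j P)) := by
        intro j
        rw [Finset.sum_eq_single_of_mem 0 (Finset.mem_range.2 (by omega))
          (fun r _ hr => by rw [zero_pow (by omega), zero_mul])]
        simp [hPr, coeff_zero_Theta P]
      have hB : (∑ r ∈ Finset.range N,
            ((2*r : ℕ) : ℝ) * (0:ℝ) ^ (2*r - 1) * eval (x 0) (pderiv i (Pr r))) = 0 := by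
        refine Finset.sum_eq_zero fun r hr => ?_
        rcases Nat.eq_zero_or_pos r with h | h
        · simp [h]
        · rw [zero_pow (by omega)]
          ring
      rw [hB, add_zero, Finset.sum_congr rfl fun j _ => by rw [hA j]] at h1
      exact h1
    have hzero : Tendsto Φ l (nhds 0) := by
      refine Tendsto.congr' ?_ (tendsto_const_nhds : Tendsto (fun _ : ℝ => (0:ℝ)) l (nhds 0))
      exact eventually_of_mem self_mem_nhdsWithin fun t ht => (hΦ0 t ht).symm
    exact tendsto_nhds_unique hlim hzero
  -- conclusion
  have hhf : ∀ i j, hess (fun τ => eval τ P) (x 0) i j = eval (x 0) (pderiv i (pderiv j P)) := by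
    intro i j
    show pd i (pd j (fun τ => eval τ P)) (x 0) = _
    rw [pd_mveval j P, pd_mveval i (pderiv j P)]
  have hnull : (hess (fun τ => eval τ P) (x 0)).mulVec (xd 0) = 0 := by
    funext i
    simp only [Matrix.mulVec, dotProduct]
    rw [Finset.sum_congr rfl fun j _ => by rw [hhf i j]]
    exact main i
  refine ⟨hnull, fun hdet => ?_⟩
  have hxd0eq : xd 0 = 0 := by
    have h := congrArg (fun v => (hess (fun τ => eval τ P) (x 0))⁻¹.mulVec v) hnull
    simpa [Matrix.mulVec_mulVec, Matrix.nonsing_inv_mul _ hdet, Matrix.one_mulVec,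
      Matrix.mulVec_zero] using h
    -- h : A⁻¹ (A xd0) = A⁻¹ 0
  refine ⟨hxd0eq, ?_⟩
  rw [← nhdsWithin_Ioc_eq_nhdsGT ht₀]
  have := hxd0
  rw [hxd0eq] at this
  exact this
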